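/- If p is a prime, n = p - 1, and δ : {0,...,n} → {-1,1} satisfies ∑_{j=0}^n δ_j * C(n,j) = 0, then either δ_j = (-1)^j for all j, or δ_j = (-1)^{j+1} for all j. In other words, the binomial coefficient bisection problem for n = p-1 has exactly 2 solutions. -/

import Mathlib

-- C(p-1, j) ≡ (-1)^j  (mod p) for j ≤ p-1
lemma choose_sub_one_congr (p : ℕ) (hp : p.Prime) :
    ∀ j ≤ p - 1, ((p - 1).choose j : ℤ) ≡ (-1) ^ j [ZMOD p] := by
  intro j hj
  induction j with
  | zero => simp [Int.ModEq.refl]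
  | succ k ih =>
    have hk : k ≤ p - 1 := Nat.le_of_succ_le hj
    have ih' := ih hk
    have hdvd : (p : ℤ) ∣ (p.choose (k + 1) : ℤ) :=
      Int.natCast_dvd_natCast.mpr (hp.dvd_choose_self (Nat.succ_ne_zero k) (by omega))
    have h1 : p - 1 + 1 = p := Nat.succ_pred_eq_of_pos hp.pos
    have hrec : ((p - 1).choose k : ℤ) + (p - 1).choose (k + 1) = p.choose (k + 1) := by
      have := Nat.choose_succ_succ' (p - 1) k
      rw [h1] at this
      exact_mod_cast congrArg (Nat.cast : ℕ → ℤ) this.symm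
    have h0 : (p.choose (k+1) : ℤ) ≡ 0 [ZMOD p] := Int.modEq_zero_iff_dvd.mpr hdvd
    calc ((p - 1).choose (k+1) : ℤ)
        = (p.choose (k+1) : ℤ) - (p-1).choose k := by linarith
      _ ≡ 0 - (-1)^k [ZMOD p] := Int.ModEq.sub h0 ih'
      _ = (-1)^(k+1) := by ring

theorem stmt_12 (p : ℕ) (hp : p.Prime) (n : ℕ) (hn : n = p - 1) (δ : ℕ → ℤ)
    (hδ : ∀ j ≤ n, δ j = 1 ∨ δ j = -1)
    (hsum : ∑ j ∈ Finset.range (n + 1), δ j * (n.choose j : ℤ) = 0) :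
    (∀ j ≤ n, δ j = (-1) ^ j) ∨ (∀ j ≤ n, δ j = (-1) ^ (j + 1)) := by
  have hcard : n + 1 = p := by
    have := hp.pos; omega
  set ε : ℕ → ℤ := fun j => δ j * (-1) ^ j with hε
  have hεmem : ∀ j ∈ Finset.range (n + 1), ε j = 1 ∨ ε j = -1 := by
    intro j hj
    have hj' : j ≤ n := Nat.lt_succ_iff.mp (Finset.mem_range.mp hj)
    rcases hδ j hj' with h | h <;> rcases Nat.even_or_odd j with he | he <;>
      simp [hε, h, he.neg_one_pow]
  set S : ℤ := ∑ j ∈ Finset.range (n + 1), ε j with hS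
  -- p divides S
  have hdvdS : (p : ℤ) ∣ S := by
    have : S = ∑ j ∈ Finset.range (n + 1), δ j * ((-1) ^ j - (n.choose j : ℤ)) := by
      rw [hS, ← sub_zero (∑ j ∈ Finset.range (n + 1), ε j), ← hsum, ← Finset.sum_sub_distrib]
      apply Finset.sum_congr rfl
      intro j _; simp [hε]; ring
    rw [this]
    apply Finset.dvd_sum
    intro j hj
    have hj' : j ≤ n := Nat.lt_succ_iff.mp (Finset.mem_range.mp hj)
    have hc : ((n.choose j : ℤ)) ≡ (-1) ^ j [ZMOD p] := by
      rw [hn]; exact choose_sub_one_congr p hp j (hn ▸ hj')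
    exact (Int.ModEq.dvd hc).mul_left (δ j)
  -- |S| ≤ n + 1
  have habs : |S| ≤ (n + 1 : ℤ) := by
    calc |S| ≤ ∑ j ∈ Finset.range (n + 1), |ε j| := Finset.abs_sum_le_sum_abs _ _
      _ = ∑ j ∈ Finset.range (n + 1), 1 := by
          apply Finset.sum_congr rfl; intro j hj
          rcases hεmem j hj with h | h <;> simp [h]
      _ = (n + 1 : ℤ) := by simp
  -- S ≠ 0
  have hSne : S ≠ 0 := by
    rcases hp.eq_two_or_odd' with h2 | hodd
    · -- p = 2 : n = 1, S = δ 0 - δ 1 = 2 δ 0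
      subst h2
      have hn1 : n = 1 := by omega
      subst hn1
      have hSe : S = δ 0 - δ 1 := by
        simp [hS, hε, Finset.sum_range_succ]; ring
      have hsum' : δ 0 + δ 1 = 0 := by
        simpa [Finset.sum_range_succ] using hsum
      rw [hSe]
      rcases hδ 0 (by norm_num) with h0 | h0 <;> rcases hδ 1 (by norm_num) with h1 | h1 <;>
        omega
    · -- p odd: S is odd
      have hp2 : p % 2 = 1 := Nat.odd_iff.mp hodd
      have h1 : S % 2 = (∑ j ∈ Finset.range (n + 1), (1 : ℤ)) % 2 := by
        rw [hS, Finset.sum_int_mod]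
        congr 1
        apply Finset.sum_congr rfl
        intro j hj
        rcases hεmem j hj with h | h <;> simp [h]
      have h2 : S % 2 = 1 := by
        rw [h1]; simp; omega
      intro h0
      rw [h0] at h2
      norm_num at h2
  -- hence S = p or S = -p, i.e. all ε j equal
  have hSval : S = (n + 1 : ℤ) ∨ S = -(n + 1 : ℤ) := by
    have h1 : (n + 1 : ℤ) ∣ S := by
      rwa [show ((n : ℤ) + 1) = (p : ℤ) by exact_mod_cast hcard]
    rcases h1 with ⟨c, hc⟩
    have hn1 : (0 : ℤ) < n + 1 := by positivity
    have : c = 1 ∨ c = -1 := by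
      rcases lt_trichotomy c 0 with h | h | h
      · right
        have : c = -1 := by nlinarith [abs_le.mp habs]
        exact this
      · exfalso; apply hSne; simp [hc, h]
      · left; nlinarith [abs_le.mp habs]
    rcases this with h | h <;> simp [hc, h]
  -- equality case of the triangle inequality
  rcases hSval with hcase | hcase
  · left
    have hall : ∀ j ∈ Finset.range (n + 1), ε j = 1 := by
      have hzero : ∑ j ∈ Finset.range (n + 1), (1 - ε j) = 0 := by
        rw [Finset.sum_sub_distrib, ← hS, hcase]; simp
      intro j hj
      have := (Finset.sum_eq_zero_iff_of_nonneg ?_).mp hzero j hj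
      · linarith
      · intro i hi; rcases hεmem i hi with h | h <;> simp [h]
    intro j hj
    have h1 : δ j * (-1) ^ j = 1 := hall j (Finset.mem_range.mpr (Nat.lt_succ_of_le hj))
    have hsq : ((-1 : ℤ) ^ j) * ((-1 : ℤ) ^ j) = 1 := by
      rw [← pow_add]; exact Even.neg_one_pow ⟨j, rfl⟩
    calc δ j = δ j * ((-1) ^ j * (-1) ^ j) := by rw [hsq, mul_one]
      _ = (δ j * (-1) ^ j) * (-1) ^ j := by ring
      _ = (-1) ^ j := by rw [h1, one_mul]
  · right
    have hall : ∀ j ∈ Finset.range (n + 1), ε j = -1 := by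
      have hzero : ∑ j ∈ Finset.range (n + 1), (1 + ε j) = 0 := by
        rw [Finset.sum_add_distrib, ← hS, hcase]; simp
      intro j hj
      have := (Finset.sum_eq_zero_iff_of_nonneg ?_).mp hzero j hj
      · linarith
      · intro i hi; rcases hεmem i hi with h | h <;> simp [h]
    intro j hj
    have h1 : δ j * (-1) ^ j = -1 := hall j (Finset.mem_range.mpr (Nat.lt_succ_of_le hj))
    have hsq : ((-1 : ℤ) ^ j) * ((-1 : ℤ) ^ j) = 1 := by
      rw [← pow_add]; exact Even.neg_one_pow ⟨j, rfl⟩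
    have h2 : δ j = -(-1) ^ j := by
      calc δ j = δ j * ((-1) ^ j * (-1) ^ j) := by rw [hsq, mul_one]
        _ = (δ j * (-1) ^ j) * (-1) ^ j := by ring
        _ = -(-1) ^ j := by rw [h1]; ring
    rw [h2, pow_succ]; ring
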